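/- arXiv:1709.01840 — 2 statements merged into one kernel-verified Lean document; each statement's English description precedes it below -/
import Mathlib

section
/- Let H be an infinite-dimensional separable complex Hilbert space and let T be a bounded linear operator on H with property (CR). Then there exist α, β, γ, δ ∈ ℂ, not all zero, and a bounded operator F on H whose range is finite-dimensional of dimension at most 3, such that α·1 + β·T + γ·T† + δ·(T†∘T) + F = 0. -/
open ContinuousLinearMap

/-- `P` is an orthogonal projection. -/
def IsOrthoProj {H : Type*} [NormedAddCommGroup H] [InnerProductSpace ℂ H]
    [CompleteSpace H] (P : H →L[ℂ] H) : Prop :=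
  P * P = P ∧ ContinuousLinearMap.adjoint P = P

/-- Property (CR): the two off-diagonal corners always have the same rank
(as a cardinal, the dimension of the range). -/
def HasCR {H : Type*} [NormedAddCommGroup H] [InnerProductSpace ℂ H]
    [CompleteSpace H] (T : H →L[ℂ] H) : Prop :=
  ∀ P : H →L[ℂ] H, IsOrthoProj P →
    LinearMap.rank ((P * T * (1 - P) : H →L[ℂ] H) : H →ₗ[ℂ] H) =
    LinearMap.rank (((1 - P) * T * P : H →L[ℂ] H) : H →ₗ[ℂ] H)

open Submodule in
/-- For a linearly independent family in a vector space there is a dual family of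
functionals. -/
lemma exists_dual_family' {W : Type*} [AddCommGroup W] [Module ℂ W] {k : ℕ}
    {v : Fin k → W} (hv : LinearIndependent ℂ v) :
    ∃ φ : Fin k → (W →ₗ[ℂ] ℂ), ∀ i j, φ i (v j) = if j = i then 1 else 0 := by
  set K := span ℂ (Set.range v) with hK
  obtain ⟨q, hq⟩ := K.exists_isCompl
  let b : Module.Basis (Fin k) ℂ K := Module.Basis.span hv
  refine ⟨fun i => (b.coord i) ∘ₗ (K.projectionOnto q hq), fun i j => ?_⟩
  have hvj : v j ∈ K := subset_span (Set.mem_range_self j)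
  have h1 : (K.projectionOnto q hq) (v j) = b j := by
    have h2 := Submodule.projectionOnto_apply_left hq ⟨v j, hvj⟩
    rw [show ((⟨v j, hvj⟩ : K) : W) = v j from rfl] at h2
    rw [h2]
    ext
    exact congrArg Subtype.val (Module.Basis.span_apply hv j).symm
  simp only [LinearMap.comp_apply, h1, Module.Basis.coord_apply, Module.Basis.repr_self]
  exact Finsupp.single_apply

/-- Brešar–Šemrl style lemma on locally linearly dependent operators: if a family
`f 0, …, f m` of linear maps is pointwise linearly dependent, while the first `m`
of them are linearly independent at some point `x₀`, then a combination
`f m - ∑ αⱼ f j` has rank at most `m`. -/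
lemma lld_rank_le {U W : Type*} [AddCommGroup U] [Module ℂ U]
    [AddCommGroup W] [Module ℂ W] {m : ℕ} (f : Fin (m + 1) → U →ₗ[ℂ] W)
    (hLLD : ∀ x : U, ¬ LinearIndependent ℂ (fun i => f i x))
    (x₀ : U) (hx₀ : LinearIndependent ℂ (fun j : Fin m => f j.castSucc x₀)) :
    ∃ α : Fin m → ℂ,
      LinearMap.rank (f (Fin.last m) - ∑ j, α j • f j.castSucc) ≤ m := by
  classical
  set v : Fin m → W := fun j => f j.castSucc x₀ with hv
  -- a nontrivial dependence at z (where the first m are independent) involves f_last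
  have last_coeff : ∀ z : U, ∀ d : Fin (m + 1) → ℂ,
      (∑ i, d i • f i z = 0) → (∃ i, d i ≠ 0) →
      (∀ e : Fin m → ℂ, (∑ j, e j • f j.castSucc z = 0) → ∀ j, e j = 0) →
      d (Fin.last m) ≠ 0 := by
    intro z d hsum hne hind hlast
    have h0 : ∑ j : Fin m, d j.castSucc • f j.castSucc z = 0 := by
      rw [Fin.sum_univ_castSucc, hlast, zero_smul, add_zero] at hsum
      exact hsum
    obtain ⟨i, hi⟩ := hne
    exact hi (Fin.lastCases hlast (fun j => hind _ h0 j) i)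
  obtain ⟨g, hg, hgne⟩ := Fintype.not_linearIndependent_iff.mp (hLLD x₀)
  have hglast : g (Fin.last m) ≠ 0 :=
    last_coeff x₀ g hg hgne (fun e he => Fintype.linearIndependent_iff.mp hx₀ e he)
  set α : Fin m → ℂ := fun j => -(g j.castSucc / g (Fin.last m)) with hα
  set S : U →ₗ[ℂ] W := f (Fin.last m) - ∑ j, α j • f j.castSucc with hS
  have hSapply : ∀ z : U, S z = f (Fin.last m) z - ∑ j, α j • f j.castSucc z := by
    intro z
    simp [hS, LinearMap.sub_apply, LinearMap.sum_apply, LinearMap.smul_apply]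
  -- the key computation, used both at `x₀` and along perturbations
  have key : ∀ (z : U) (d : Fin (m + 1) → ℂ), d (Fin.last m) ≠ 0 →
      (∑ i, d i • f i z = 0) →
      S z = ∑ j, (-(d j.castSucc / d (Fin.last m)) - α j) • f j.castSucc z := by
    intro z d hdl hsum
    have h1 : d (Fin.last m) • f (Fin.last m) z
        = -∑ j : Fin m, d j.castSucc • f j.castSucc z := by
      rw [Fin.sum_univ_castSucc] at hsum
      exact eq_neg_of_add_eq_zero_right hsum
    have h3 : (d (Fin.last m))⁻¹ • (d (Fin.last m) • f (Fin.last m) z)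
        = (d (Fin.last m))⁻¹ • (-∑ j : Fin m, d j.castSucc • f j.castSucc z) := by
      rw [h1]
    rw [smul_smul, inv_mul_cancel₀ hdl, one_smul] at h3
    rw [hSapply, h3, smul_neg, Finset.smul_sum]
    simp only [sub_smul, neg_smul, div_eq_inv_mul, mul_smul, Finset.sum_sub_distrib,
      Finset.sum_neg_distrib]
  have hSx₀ : S x₀ = 0 := by
    rw [key x₀ g hglast hg]
    refine Finset.sum_eq_zero fun j _ => ?_
    have hz : -(g j.castSucc / g (Fin.last m)) - α j = 0 := by simp [hα]
    rw [hz, zero_smul]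
  refine ⟨α, ?_⟩
  have hrange : LinearMap.range S ≤ Submodule.span ℂ (Set.range v) := by
    rintro _ ⟨y, rfl⟩
    by_contra hy
    have hcons : LinearIndependent ℂ (Fin.cons (S y) v : Fin (m + 1) → W) :=
      linearIndependent_fin_cons.mpr ⟨hx₀, hy⟩
    obtain ⟨χ, hχ⟩ := exists_dual_family' hcons
    set ψ : W →ₗ[ℂ] ℂ := χ 0 with hψ
    set φ : Fin m → (W →ₗ[ℂ] ℂ) := fun i => χ i.succ with hφ
    have hφv : ∀ i j, φ i (v j) = if j = i then 1 else 0 := by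
      intro i j
      have h := hχ i.succ j.succ
      rw [Fin.cons_succ] at h
      rw [hφ]
      rw [h]
      simp [Fin.succ_inj]
    have hφS : ∀ i, φ i (S y) = 0 := by
      intro i
      have h := hχ i.succ 0
      rw [Fin.cons_zero] at h
      rw [hφ, h]
      simp [(Fin.succ_ne_zero i).symm]
    have hψS : ψ (S y) = 1 := by
      have h := hχ 0 0
      rw [Fin.cons_zero] at h
      rw [hψ, h]
      simp
    set B : Matrix (Fin m) (Fin m) ℂ := Matrix.of (fun i j => φ i (f j.castSucc y)) with hB
    obtain ⟨t, ht0, htdet⟩ : ∃ t : ℂ, t ≠ 0 ∧ (1 + t • B).det ≠ 0 := by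
      have hcont : Continuous fun t : ℂ => (1 + t • B).det := by
        apply Continuous.matrix_det
        fun_prop
      have hev : ∀ᶠ s in nhds (0 : ℂ), (1 + s • B).det ≠ 0 :=
        hcont.continuousAt.eventually_ne (by simp)
      have hev' : ∀ᶠ s in nhdsWithin (0 : ℂ) {(0 : ℂ)}ᶜ,
          s ≠ 0 ∧ (1 + s • B).det ≠ 0 := by
        filter_upwards [hev.filter_mono nhdsWithin_le_nhds, self_mem_nhdsWithin] with s h1 h2
        exact ⟨h2, h1⟩
      exact hev'.exists
    haveI := (1 + t • B).invertibleOfIsUnitDet (isUnit_iff_ne_zero.mpr htdet)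
    have hinj := Matrix.mulVec_injective_of_invertible (1 + t • B)
    set w : Fin m → W := fun j => f j.castSucc (x₀ + t • y) with hw
    have hwj : ∀ j, w j = v j + t • f j.castSucc y := by
      intro j
      simp [hw, hv, map_add, map_smul]
    have hφw : ∀ i j, φ i (w j) = (1 + t • B) i j := by
      intro i j
      rw [hwj, map_add, map_smul, hφv]
      simp only [Matrix.add_apply, Matrix.smul_apply, Matrix.one_apply, hB, Matrix.of_apply,
        smul_eq_mul]
      congr 1
      simp [eq_comm]
    have hmulvec : ∀ c : Fin m → ℂ, (∑ j, c j • w j = S y ∨ ∑ j, c j • w j = 0) →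
        ((1 + t • B).mulVec c = 0) := by
      intro c hc
      funext i
      have h1 : φ i (∑ j, c j • w j) = ∑ j, c j * φ i (w j) := by
        rw [map_sum]
        exact Finset.sum_congr rfl fun j _ => by rw [map_smul, smul_eq_mul]
      have h2 : φ i (∑ j, c j • w j) = 0 := by
        rcases hc with h | h
        · rw [h, hφS]
        · rw [h, map_zero]
      rw [h1] at h2
      simp only [Matrix.mulVec, dotProduct, Pi.zero_apply]
      rw [← h2]
      exact Finset.sum_congr rfl fun j _ => by rw [hφw, mul_comm]
    have hindw : ∀ e : Fin m → ℂ,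
        (∑ j, e j • f j.castSucc (x₀ + t • y) = 0) → ∀ j, e j = 0 := by
      intro e he j
      have h0 : (1 + t • B).mulVec e = 0 := hmulvec e (Or.inr (by rw [← he]))
      have he0 : e = 0 := hinj (by rw [h0, Matrix.mulVec_zero])
      rw [he0]
      rfl
    obtain ⟨d, hd, hdne⟩ := Fintype.not_linearIndependent_iff.mp (hLLD (x₀ + t • y))
    have hdlast : d (Fin.last m) ≠ 0 := last_coeff _ d hd hdne hindw
    have hkey := key (x₀ + t • y) d hdlast hd
    have hSz : S (x₀ + t • y) = t • S y := by
      rw [map_add, map_smul, hSx₀, zero_add]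
    set e : Fin m → ℂ := fun j => -(d j.castSucc / d (Fin.last m)) - α j with he
    have hSy : S y = ∑ j, (t⁻¹ * e j) • w j := by
      have h1 : t • S y = ∑ j, e j • w j := by rw [← hSz, hkey]
      have h2 : t⁻¹ • (t • S y) = S y := by rw [smul_smul, inv_mul_cancel₀ ht0, one_smul]
      rw [← h2, h1, Finset.smul_sum]
      exact Finset.sum_congr rfl fun j _ => by rw [smul_smul]
    have h0 : (1 + t • B).mulVec (fun j => t⁻¹ * e j) = 0 :=
      hmulvec _ (Or.inl hSy.symm)
    have hc0 : (fun j => t⁻¹ * e j) = 0 := hinj (by rw [h0, Matrix.mulVec_zero])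
    have hSy0 : S y = 0 := by
      rw [hSy]
      refine Finset.sum_eq_zero fun j _ => ?_
      have hcj : t⁻¹ * e j = 0 := congrFun hc0 j
      rw [hcj, zero_smul]
    rw [hSy0, map_zero] at hψS
    exact one_ne_zero hψS.symm
  have h1 : LinearMap.rank S ≤ Module.rank ℂ (Submodule.span ℂ (Set.range v)) :=
    Submodule.rank_mono hrange
  refine h1.trans ((rank_span_le _).trans ?_)
  simpa using Cardinal.mk_range_le_lift (f := v)

/-- If a linear map has rank at most one, the images of any two vectors are
linearly dependent. -/
lemma pair_dep {U W : Type*} [AddCommGroup U] [Module ℂ U] [AddCommGroup W]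
    [Module ℂ W] (A : U →ₗ[ℂ] W) (hA : LinearMap.rank A ≤ 1) (z₁ z₂ : U) :
    ∃ c₁ c₂ : ℂ, ¬(c₁ = 0 ∧ c₂ = 0) ∧ c₁ • A z₁ + c₂ • A z₂ = 0 := by
  rw [LinearMap.rank] at hA
  obtain ⟨v₀, hv₀⟩ := rank_le_one_iff.mp hA
  obtain ⟨r₁, hr₁⟩ := hv₀ ⟨A z₁, LinearMap.mem_range_self _ _⟩
  obtain ⟨r₂, hr₂⟩ := hv₀ ⟨A z₂, LinearMap.mem_range_self _ _⟩
  by_cases h1 : r₁ = 0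
  · refine ⟨1, 0, by simp, ?_⟩
    have hz : A z₁ = 0 := by
      have h := congrArg (Subtype.val) hr₁
      simpa [h1] using h.symm
    simp [hz]
  · refine ⟨r₂, -r₁, fun h => h1 (neg_eq_zero.mp h.2), ?_⟩
    have h2 : r₂ • A z₁ = (r₂ * r₁) • (v₀ : W) := by
      have h := congrArg (fun p => r₂ • (Subtype.val p)) hr₁
      simpa [smul_smul] using h.symm
    have h3 : r₁ • A z₂ = (r₁ * r₂) • (v₀ : W) := by
      have h := congrArg (fun p => r₁ • (Subtype.val p)) hr₂
      simpa [smul_smul] using h.symm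
    rw [neg_smul, h2, h3, mul_comm]
    abel

open scoped InnerProductSpace in
/-- The key geometric consequence of property (CR): for every `x`, some nontrivial
combination of `T†x` and `T†Tx` lies in the span of `x` and `Tx`. -/
lemma geom_dep {H : Type*} [NormedAddCommGroup H] [InnerProductSpace ℂ H]
    [CompleteSpace H] (T : H →L[ℂ] H) (hT : HasCR T) (x : H) :
    ∃ a b : ℂ, ¬(a = 0 ∧ b = 0) ∧
      a • (adjoint T x) + b • (adjoint T (T x)) ∈ Submodule.span ℂ {x, T x} := by
  classical
  set M : Submodule ℂ H := Submodule.span ℂ {x, T x} with hM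
  haveI : FiniteDimensional ℂ M := FiniteDimensional.span_of_finite ℂ (Set.toFinite _)
  set P : H →L[ℂ] H := M.subtypeL ∘L M.orthogonalProjectionOnto with hP
  have hPmem : ∀ z : H, P z ∈ M := fun z => (M.orthogonalProjectionOnto z).2
  have hPid : ∀ z ∈ M, P z = z := by
    intro z hz
    have h := Submodule.orthogonalProjectionOnto_mem_subspace_eq_self (K := M) ⟨z, hz⟩
    calc P z = ((M.orthogonalProjectionOnto ((⟨z, hz⟩ : M) : H) : M) : H) := rfl
    _ = ((⟨z, hz⟩ : M) : H) := by rw [h]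
    _ = z := rfl
  have hadjP : adjoint P = P := by
    rw [← star_eq_adjoint]
    exact (isSelfAdjoint_starProjection M)
  have hproj : IsOrthoProj P := by
    constructor
    · ext z
      exact hPid (P z) (hPmem z)
    · exact hadjP
  have hadj1P : adjoint (1 - P : H →L[ℂ] H) = 1 - P := by
    rw [← star_eq_adjoint, star_sub, star_one, star_eq_adjoint, hadjP]
  have hxM : x ∈ M := Submodule.subset_span (by simp)
  have hTxM : T x ∈ M := Submodule.subset_span (by simp)
  have h1Px : (1 - P) (T x) = 0 := by
    rw [sub_apply, one_apply_eq_self, hPid (T x) hTxM, sub_self]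
  have hr2 : LinearMap.rank (((1 - P) * T * P : H →L[ℂ] H) : H →ₗ[ℂ] H) ≤ 1 := by
    have hrange : LinearMap.range (((1 - P) * T * P : H →L[ℂ] H) : H →ₗ[ℂ] H) ≤
        ℂ ∙ ((1 - P) (T (T x))) := by
      rintro _ ⟨z, rfl⟩
      have hz : (((1 - P) * T * P : H →L[ℂ] H) : H →ₗ[ℂ] H) z = (1 - P) (T (P z)) := rfl
      obtain ⟨p, q, hpq⟩ := Submodule.mem_span_pair.mp (hPmem z)
      rw [hz, ← hpq, map_add, map_smul, map_smul, map_add, map_smul, map_smul, h1Px,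
        smul_zero, zero_add]
      exact Submodule.mem_span_singleton.mpr ⟨q, rfl⟩
    refine (Submodule.rank_mono hrange).trans ?_
    refine (rank_span_le _).trans ?_
    simp
  have hr1 : LinearMap.rank ((P * T * (1 - P) : H →L[ℂ] H) : H →ₗ[ℂ] H) ≤ 1 :=
    (hT P hproj).trans_le hr2
  set A : H →L[ℂ] H := P * T * (1 - P) with hA
  have hinner : ∀ y ∈ M, ∀ z : H,
      ⟪y, A z⟫_ℂ = ⟪(1 - P) (adjoint T y), z⟫_ℂ := by
    intro y hy z
    have h1 : A z = P (T ((1 - P) z)) := rfl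
    rw [h1]
    have e1 : ⟪y, P (T ((1 - P) z))⟫_ℂ = ⟪y, T ((1 - P) z)⟫_ℂ := by
      rw [← adjoint_inner_left P (T ((1 - P) z)) y, hadjP, hPid y hy]
    have e2 : ⟪y, T ((1 - P) z)⟫_ℂ = ⟪adjoint T y, (1 - P) z⟫_ℂ :=
      (adjoint_inner_left T ((1 - P) z) y).symm
    have e3 : ⟪adjoint T y, (1 - P) z⟫_ℂ = ⟪(1 - P) (adjoint T y), z⟫_ℂ := by
      rw [← adjoint_inner_left (1 - P : H →L[ℂ] H) z (adjoint T y), hadj1P]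
    rw [e1, e2, e3]
  set u₁ : H := (1 - P) (adjoint T x) with hu₁
  set u₂ : H := (1 - P) (adjoint T (T x)) with hu₂
  obtain ⟨c₁, c₂, hc, hsum⟩ := pair_dep ((A : H →L[ℂ] H) : H →ₗ[ℂ] H) hr1 u₁ u₂
  refine ⟨c₁, c₂, hc, ?_⟩
  set r : H := c₁ • adjoint T x + c₂ • adjoint T (T x) with hr
  have hvec : c₁ • u₁ + c₂ • u₂ = (1 - P) r := by
    rw [hr, map_add, map_smul, map_smul]
  have hAh : A ((1 - P) r) = 0 := by
    rw [← hvec, map_add, map_smul, map_smul]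
    simpa using hsum
  have hinner0 : ⟪(1 - P) r, (1 - P) r⟫_ℂ = 0 := by
    have g1 : ⟪u₁, (1 - P) r⟫_ℂ = 0 := by
      rw [← hinner x hxM ((1 - P) r), hAh, inner_zero_right]
    have g2 : ⟪u₂, (1 - P) r⟫_ℂ = 0 := by
      rw [← hinner (T x) hTxM ((1 - P) r), hAh, inner_zero_right]
    calc ⟪(1 - P) r, (1 - P) r⟫_ℂ = ⟪c₁ • u₁ + c₂ • u₂, (1 - P) r⟫_ℂ := by rw [hvec]
    _ = 0 := by
      rw [inner_add_left, inner_smul_left, inner_smul_left, g1, g2]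
      simp
  have h0 : (1 - P) r = 0 := inner_self_eq_zero.mp hinner0
  have hPr : r = P r := by
    have h := sub_eq_zero.mp (by simpa [sub_apply, one_apply_eq_self] using h0)
    exact h
  have hrM : r ∈ M := by
    rw [hPr]
    exact hPmem r
  exact hrM

/-- A linear map which fixes every line is a scalar. -/
lemma scalar_of_loc {H : Type*} [AddCommGroup H] [Module ℂ H] (f : H →ₗ[ℂ] H)
    (h : ∀ x : H, ∃ c : ℂ, f x = c • x) : ∃ c : ℂ, ∀ x, f x = c • x := by
  by_cases hall : ∀ x : H, x = 0
  · exact ⟨0, fun x => by rw [hall x, map_zero, smul_zero]⟩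
  push_neg at hall
  obtain ⟨x₀, hx₀⟩ := hall
  obtain ⟨c₀, hc₀⟩ := h x₀
  refine ⟨c₀, fun y => ?_⟩
  by_cases hy : y = 0
  · simp [hy]
  obtain ⟨cy, hcy⟩ := h y
  by_cases hspan : ∃ t : ℂ, y = t • x₀
  · obtain ⟨t, rfl⟩ := hspan
    rw [map_smul, hc₀, smul_smul, smul_smul, mul_comm]
  · obtain ⟨c', hc'⟩ := h (x₀ + y)
    rw [map_add, hc₀, hcy, smul_add] at hc'
    have hrel : (c₀ - c') • x₀ + (cy - c') • y = 0 := by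
      have e : (c₀ - c') • x₀ + (cy - c') • y = (c₀ • x₀ + cy • y) - (c' • x₀ + c' • y) := by
        rw [sub_smul, sub_smul]
        abel
      rw [e, hc', sub_self]
    by_cases hcc : cy - c' = 0
    · have h2 : (c₀ - c') • x₀ = 0 := by
        rw [hcc, zero_smul, add_zero] at hrel
        exact hrel
      have h3 : c₀ = c' := by
        by_contra hne
        rcases smul_eq_zero.mp h2 with h | h
        · exact hne (sub_eq_zero.mp h)
        · exact hx₀ h
      have h4 : cy = c₀ := by
        rw [h3]
        exact sub_eq_zero.mp hcc
      rw [hcy, h4]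
    · exfalso
      apply hspan
      have h5 : (cy - c') • y = -((c₀ - c') • x₀) := eq_neg_of_add_eq_zero_right hrel
      refine ⟨-((cy - c')⁻¹ * (c₀ - c')), ?_⟩
      have h6 : (cy - c')⁻¹ • ((cy - c') • y) = y := by
        rw [smul_smul, inv_mul_cancel₀ hcc, one_smul]
      rw [← h6, h5, smul_neg, smul_smul, neg_smul]

lemma rank_neg_eq {U W : Type*} [AddCommGroup U] [Module ℂ U] [AddCommGroup W]
    [Module ℂ W] (g : U →ₗ[ℂ] W) : LinearMap.rank (-g) = LinearMap.rank g := by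
  rw [LinearMap.rank, LinearMap.rank, LinearMap.range_neg]

theorem stmt13 {H : Type*} [NormedAddCommGroup H] [InnerProductSpace ℂ H]
    [CompleteSpace H] [TopologicalSpace.SeparableSpace H]
    (hinf : ¬ FiniteDimensional ℂ H) (T : H →L[ℂ] H) (hT : HasCR T) :
    ∃ (α β γ δ : ℂ) (F : H →L[ℂ] H),
      ¬ (α = 0 ∧ β = 0 ∧ γ = 0 ∧ δ = 0) ∧
      LinearMap.rank ((F : H →L[ℂ] H) : H →ₗ[ℂ] H) ≤ 3 ∧
      α • (1 : H →L[ℂ] H) + β • T + γ • ContinuousLinearMap.adjoint T +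
        δ • (ContinuousLinearMap.adjoint T * T) + F = 0 := by
  classical
  by_cases h1 : ∃ x₀ : H, LinearIndependent ℂ ![x₀, T x₀, adjoint T x₀]
  · -- generic case: use the four operators 1, T, T†, T†T
    obtain ⟨x₀, hx₀'⟩ := h1
    set f4 : Fin 4 → H →ₗ[ℂ] H :=
      ![LinearMap.id, (T : H →ₗ[ℂ] H), ((adjoint T : H →L[ℂ] H) : H →ₗ[ℂ] H),
        ((adjoint T * T : H →L[ℂ] H) : H →ₗ[ℂ] H)] with hf4
    have hLLD : ∀ x : H, ¬ LinearIndependent ℂ (fun i => f4 i x) := by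
      intro x hind
      obtain ⟨a, b, hab, hmem⟩ := geom_dep T hT x
      obtain ⟨p, q, hpq⟩ := Submodule.mem_span_pair.mp hmem
      have hz : ∑ i, (![p, q, -a, -b] : Fin 4 → ℂ) i • (fun i => f4 i x) i = 0 := by
        have e : ∑ i, (![p, q, -a, -b] : Fin 4 → ℂ) i • (fun i => f4 i x) i
            = (p • x + q • T x) - (a • adjoint T x + b • adjoint T (T x)) := by
          simp [Fin.sum_univ_four, hf4]
          abel
        rw [e, hpq, sub_self]
      have hall := Fintype.linearIndependent_iff.mp hind _ hz
      refine hab ⟨?_, ?_⟩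
      · have h := hall 2
        simpa using h
      · have h := hall 3
        simpa using h
    have hx₀ : LinearIndependent ℂ (fun j : Fin 3 => f4 j.castSucc x₀) := by
      have e : (fun j : Fin 3 => f4 j.castSucc x₀) = ![x₀, T x₀, adjoint T x₀] := by
        funext j
        fin_cases j <;> rfl
      rw [e]
      exact hx₀'
    obtain ⟨α', hrank⟩ := lld_rank_le f4 hLLD x₀ hx₀
    set F : H →L[ℂ] H :=
      α' 0 • 1 + α' 1 • T + α' 2 • adjoint T - adjoint T * T with hF
    have hcoe : ((F : H →L[ℂ] H) : H →ₗ[ℂ] H)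
        = -(f4 (Fin.last 3) - ∑ j, α' j • f4 j.castSucc) := by
      ext z
      simp [hF, hf4, Fin.sum_univ_three]
    refine ⟨-(α' 0), -(α' 1), -(α' 2), 1, F, fun hcontr => one_ne_zero hcontr.2.2.2, ?_, ?_⟩
    · rw [hcoe, rank_neg_eq]
      exact_mod_cast hrank
    · rw [hF]
      module
  · by_cases h2 : ∃ x₀ : H, LinearIndependent ℂ ![x₀, T x₀]
    · -- second case: use the three operators 1, T, T†
      obtain ⟨x₀, hx₀'⟩ := h2
      push_neg at h1
      set f3 : Fin 3 → H →ₗ[ℂ] H :=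
        ![LinearMap.id, (T : H →ₗ[ℂ] H), ((adjoint T : H →L[ℂ] H) : H →ₗ[ℂ] H)] with hf3
      have hLLD : ∀ x : H, ¬ LinearIndependent ℂ (fun i => f3 i x) := by
        intro x hind
        refine h1 x ?_
        have e : (fun i => f3 i x) = ![x, T x, adjoint T x] := by
          funext i
          fin_cases i <;> rfl
        rw [e] at hind
        exact hind
      have hx₀ : LinearIndependent ℂ (fun j : Fin 2 => f3 j.castSucc x₀) := by
        have e : (fun j : Fin 2 => f3 j.castSucc x₀) = ![x₀, T x₀] := by
          funext j
          fin_cases j <;> rfl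
        rw [e]
        exact hx₀'
      obtain ⟨α', hrank⟩ := lld_rank_le f3 hLLD x₀ hx₀
      set F : H →L[ℂ] H := α' 0 • 1 + α' 1 • T - adjoint T with hF
      have hcoe : ((F : H →L[ℂ] H) : H →ₗ[ℂ] H)
          = -(f3 (Fin.last 2) - ∑ j, α' j • f3 j.castSucc) := by
        ext z
        simp [hF, hf3, Fin.sum_univ_two]
      refine ⟨-(α' 0), -(α' 1), 1, 0, F, fun hcontr => one_ne_zero hcontr.2.2.1, ?_, ?_⟩
      · rw [hcoe, rank_neg_eq]
        refine hrank.trans ?_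
        norm_num
      · rw [hF]
        module
    · -- degenerate case: T is scalar
      push_neg at h2
      have hloc : ∀ x : H, ∃ c : ℂ, T x = c • x := by
        intro x
        obtain ⟨g, hg, i, hi⟩ := Fintype.not_linearIndependent_iff.mp (h2 x)
        rw [Fin.sum_univ_two] at hg
        simp only [Matrix.cons_val_zero, Matrix.cons_val_one, Matrix.head_cons] at hg
        by_cases hg1 : g 1 = 0
        · have hg0 : g 0 ≠ 0 := by
            fin_cases i
            · exact hi
            · exact absurd hg1 hi
          have hx : x = 0 := by
            rw [hg1, zero_smul, add_zero] at hg
            rcases smul_eq_zero.mp hg with h | h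
            · exact absurd h hg0
            · exact h
          exact ⟨0, by rw [hx, map_zero, zero_smul]⟩
        · refine ⟨-(g 0 / g 1), ?_⟩
          have h5 : g 1 • T x = -(g 0 • x) := eq_neg_of_add_eq_zero_right hg
          have h6 : (g 1)⁻¹ • (g 1 • T x) = T x := by
            rw [smul_smul, inv_mul_cancel₀ hg1, one_smul]
          rw [← h6, h5, smul_neg, smul_smul, ← neg_smul, ← div_eq_inv_mul]
      obtain ⟨c, hc⟩ := scalar_of_loc (T : H →ₗ[ℂ] H) hloc
      refine ⟨c, -1, 0, 0, 0, fun hcontr => one_ne_zero (neg_eq_zero.mp hcontr.2.1), ?_, ?_⟩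
      · have hz : ((0 : H →L[ℂ] H) : H →ₗ[ℂ] H) = 0 := rfl
        rw [hz, LinearMap.rank_zero]
        norm_num
      · ext z
        have hz : T z = (T : H →ₗ[ℂ] H) z := rfl
        simp only [ContinuousLinearMap.add_apply, ContinuousLinearMap.smul_apply,
          ContinuousLinearMap.one_apply, ContinuousLinearMap.zero_apply,
          ContinuousLinearMap.neg_apply, neg_smul, one_smul, zero_smul]
        rw [hz, hc z]
        abel
end

section
/- Let H be an infinite-dimensional separable complex Hilbert space and let U be a unitary operator on H whose spectrum σ(U) is not the whole unit circle {z ∈ ℂ : |z| = 1}. Then U has property (CR). -/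
set_option maxHeartbeats 1000000

open ContinuousLinearMap

section Aux

variable {H : Type*} [NormedAddCommGroup H] [InnerProductSpace ℂ H] [CompleteSpace H]

local notation "⟪" x ", " y "⟫" => @inner ℂ _ _ x y

private lemma rank_congr_ker {f g : H →ₗ[ℂ] H} (h : LinearMap.ker f = LinearMap.ker g) :
    LinearMap.rank f = LinearMap.rank g := by
  have h1 := f.quotKerEquivRange.rank_eq
  have h2 := g.quotKerEquivRange.rank_eq
  rw [LinearMap.rank, ← h1, LinearMap.rank, ← h2, h]

private lemma ker_adjoint_mul_self (T : H →L[ℂ] H) :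
    LinearMap.ker ((adjoint T * T : H →L[ℂ] H) : H →ₗ[ℂ] H) =
      LinearMap.ker (T : H →ₗ[ℂ] H) := by
  ext x
  simp only [LinearMap.mem_ker, ContinuousLinearMap.coe_coe, ContinuousLinearMap.mul_apply]
  constructor
  · intro hx
    have h0 : ⟪T x, T x⟫ = 0 := by
      rw [← adjoint_inner_left, hx, inner_zero_left]
    exact inner_self_eq_zero.mp h0
  · intro hx
    rw [hx, map_zero]

private lemma rank_adjoint_mul_self (T : H →L[ℂ] H) :
    LinearMap.rank ((adjoint T * T : H →L[ℂ] H) : H →ₗ[ℂ] H) =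
      LinearMap.rank (T : H →ₗ[ℂ] H) :=
  rank_congr_ker (ker_adjoint_mul_self T)

private lemma rank_le_adjoint (T : H →L[ℂ] H) :
    LinearMap.rank (T : H →ₗ[ℂ] H) ≤
      LinearMap.rank ((adjoint T : H →L[ℂ] H) : H →ₗ[ℂ] H) := by
  rw [← rank_adjoint_mul_self T]
  have hco : ((adjoint T * T : H →L[ℂ] H) : H →ₗ[ℂ] H) =
      ((adjoint T : H →L[ℂ] H) : H →ₗ[ℂ] H).comp (T : H →ₗ[ℂ] H) := rfl
  rw [hco]
  exact LinearMap.rank_comp_le_left _ _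

private lemma rank_adjoint (T : H →L[ℂ] H) :
    LinearMap.rank ((adjoint T : H →L[ℂ] H) : H →ₗ[ℂ] H) =
      LinearMap.rank (T : H →ₗ[ℂ] H) := by
  refine le_antisymm ?_ (rank_le_adjoint T)
  have := rank_le_adjoint (adjoint T)
  rwa [adjoint_adjoint] at this

private lemma rank_mul_injective (A B : H →L[ℂ] H) (h : Function.Injective A) :
    LinearMap.rank ((A * B : H →L[ℂ] H) : H →ₗ[ℂ] H) = LinearMap.rank (B : H →ₗ[ℂ] H) := by
  have hco : ((A * B : H →L[ℂ] H) : H →ₗ[ℂ] H) =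
      ((A : H →L[ℂ] H) : H →ₗ[ℂ] H).comp (B : H →ₗ[ℂ] H) := rfl
  rw [hco, LinearMap.rank, LinearMap.rank, LinearMap.range_comp]
  exact ((Submodule.equivMapOfInjective ((A : H →L[ℂ] H) : H →ₗ[ℂ] H) h _).rank_eq).symm

private lemma rank_mul_surjective (A B : H →L[ℂ] H) (h : Function.Surjective B) :
    LinearMap.rank ((A * B : H →L[ℂ] H) : H →ₗ[ℂ] H) = LinearMap.rank (A : H →ₗ[ℂ] H) := by
  have hco : ((A * B : H →L[ℂ] H) : H →ₗ[ℂ] H) =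
      ((A : H →L[ℂ] H) : H →ₗ[ℂ] H).comp (B : H →ₗ[ℂ] H) := rfl
  rw [hco, LinearMap.rank, LinearMap.range_comp]
  have h2 : LinearMap.range ((B : H →L[ℂ] H) : H →ₗ[ℂ] H) = ⊤ :=
    LinearMap.range_eq_top.mpr h
  rw [h2, Submodule.map_top]

private lemma bijective_of_coercive {c : ℝ} (hc : 0 < c) (A : H →L[ℂ] H)
    (hA : ∀ x : H, c * ‖x‖ ^ 2 ≤ RCLike.re ⟪A x, x⟫)
    (hA' : ∀ x : H, c * ‖x‖ ^ 2 ≤ RCLike.re ⟪adjoint A x, x⟫) :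
    Function.Injective A ∧ Function.Surjective A := by
  have hbdd : ∀ x : H, ‖x‖ ≤ (c⁻¹ : ℝ) * ‖A x‖ := by
    intro x
    rcases eq_or_lt_of_le (norm_nonneg x) with h0 | h0
    · rw [← h0]
      positivity
    · have h1 : c * ‖x‖ ^ 2 ≤ ‖A x‖ * ‖x‖ := by
        refine (hA x).trans ?_
        exact (RCLike.re_le_norm _).trans (norm_inner_le_norm _ _)
      have h2 : c * ‖x‖ ≤ ‖A x‖ := by nlinarith
      calc ‖x‖ = c⁻¹ * (c * ‖x‖) := by field_simp
        _ ≤ c⁻¹ * ‖A x‖ := by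
            exact mul_le_mul_of_nonneg_left h2 (inv_nonneg.mpr hc.le)
  have hinj : Function.Injective A := by
    intro x y hxy
    have h0 : A (x - y) = 0 := by rw [map_sub, hxy, sub_self]
    have := hbdd (x - y)
    rw [h0, norm_zero, mul_zero] at this
    have : x - y = 0 := norm_le_zero_iff.mp this
    exact sub_eq_zero.mp this
  refine ⟨hinj, ?_⟩
  have hanti : AntilipschitzWith (Real.toNNReal c⁻¹) A := by
    refine A.antilipschitz_of_bound ?_
    intro x
    rw [Real.coe_toNNReal _ (inv_nonneg.mpr hc.le)]
    exact hbdd x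
  have hclosed : IsClosed (Set.range A) := hanti.isClosed_range A.uniformContinuous
  have hcr : IsClosed ((LinearMap.range (A : H →ₗ[ℂ] H) : Submodule ℂ H) : Set H) := by
    have : ((LinearMap.range (A : H →ₗ[ℂ] H) : Submodule ℂ H) : Set H) = Set.range A := by
      ext y
      simp [LinearMap.mem_range]
    rwa [this]
  haveI : CompleteSpace (LinearMap.range (A : H →ₗ[ℂ] H)) := hcr.completeSpace_coe
  have horth : (LinearMap.range (A : H →ₗ[ℂ] H))ᗮ = ⊥ := by
    rw [Submodule.eq_bot_iff]
    intro x hx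
    rw [Submodule.mem_orthogonal] at hx
    have h0 : ⟪A x, x⟫ = 0 := hx (A x) ⟨x, rfl⟩
    have h1 := hA x
    rw [h0, map_zero] at h1
    have h2 : ‖x‖ ^ 2 = 0 := le_antisymm (by nlinarith) (sq_nonneg _)
    exact norm_eq_zero.mp (by simpa using (pow_eq_zero_iff (two_ne_zero)).mp h2)
  have hr : LinearMap.range (A : H →ₗ[ℂ] H) = ⊤ := Submodule.orthogonal_eq_bot_iff.mp horth
  intro y
  have : y ∈ LinearMap.range (A : H →ₗ[ℂ] H) := hr ▸ Submodule.mem_top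
  obtain ⟨x, hx⟩ := this
  exact ⟨x, hx⟩

private lemma key_corner_rank (V : H →L[ℂ] H) (hV1 : adjoint V * V = 1)
    (hV2 : V * adjoint V = 1) {c : ℝ} (hc0 : 0 < c) (hc1 : c ≤ 1)
    (hVc : ∀ x : H, RCLike.re ⟪V x, x⟫ ≤ (1 - c) * ‖x‖ ^ 2)
    (P : H →L[ℂ] H) (hP2 : P * P = P) (hPa : adjoint P = P) :
    LinearMap.rank ((P * V * (1 - P) : H →L[ℂ] H) : H →ₗ[ℂ] H) =
    LinearMap.rank (((1 - P) * V * P : H →L[ℂ] H) : H →ₗ[ℂ] H) := by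
  have hstarP : star P = P := by rw [star_eq_adjoint]; exact hPa
  obtain ⟨α, hαdef⟩ : ∃ α : H →L[ℂ] H, α = P * V * P := ⟨_, rfl⟩
  have hαa : adjoint α = P * (adjoint V * P) := by
    rw [← star_eq_adjoint, hαdef, star_mul, star_mul, hstarP, star_eq_adjoint]
  obtain ⟨W, hWdef⟩ : ∃ W : H →L[ℂ] H, W = 1 - α := ⟨_, rfl⟩
  have hWa : adjoint W = 1 - adjoint α := by
    rw [← star_eq_adjoint, hWdef, star_sub, star_one, star_eq_adjoint]
  -- norm of projection
  have hPnorm : ∀ x : H, ‖P x‖ ≤ ‖x‖ := by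
    intro x
    rcases eq_or_lt_of_le (norm_nonneg (P x)) with h0 | h0
    · rw [← h0]; exact norm_nonneg x
    · have h1 : ⟪P x, P x⟫ = ⟪P x, x⟫ := by
        rw [← adjoint_inner_left, hPa, ← ContinuousLinearMap.mul_apply, hP2]
      have h2 : ‖P x‖ ^ 2 ≤ ‖P x‖ * ‖x‖ := by
        rw [← inner_self_eq_norm_sq (𝕜 := ℂ), h1]
        exact (RCLike.re_le_norm _).trans (norm_inner_le_norm _ _)
      nlinarith
  -- coercivity of W
  have hcoW : ∀ x : H, c * ‖x‖ ^ 2 ≤ RCLike.re ⟪W x, x⟫ := by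
    intro x
    have e1 : (P * V * P) x = P (V (P x)) := rfl
    have h1 : ⟪α x, x⟫ = ⟪V (P x), P x⟫ := by
      rw [hαdef]
      calc ⟪(P * V * P) x, x⟫ = ⟪P (V (P x)), x⟫ := rfl
        _ = ⟪adjoint P (V (P x)), x⟫ := by rw [hPa]
        _ = ⟪V (P x), P x⟫ := adjoint_inner_left P x (V (P x))
    have h2 : RCLike.re ⟪V (P x), P x⟫ ≤ (1 - c) * ‖P x‖ ^ 2 := hVc (P x)
    have h3 : (1 - c) * ‖P x‖ ^ 2 ≤ (1 - c) * ‖x‖ ^ 2 := by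
      have h1c : (0:ℝ) ≤ 1 - c := by linarith
      exact mul_le_mul_of_nonneg_left (pow_le_pow_left₀ (norm_nonneg _) (hPnorm x) 2) h1c
    have h4 : ⟪W x, x⟫ = ⟪x, x⟫ - ⟪α x, x⟫ := by
      have : W x = x - α x := by
        rw [hWdef]
        simp [ContinuousLinearMap.sub_apply]
      rw [this, inner_sub_left]
    rw [h4, map_sub, inner_self_eq_norm_sq (𝕜 := ℂ), h1]
    linarith
  have hcoWa : ∀ x : H, c * ‖x‖ ^ 2 ≤ RCLike.re ⟪adjoint W x, x⟫ := by
    intro x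
    have h0 : ⟪adjoint W x, x⟫ = ⟪x, W x⟫ := adjoint_inner_left W x x
    rw [h0, inner_re_symm]
    exact hcoW x
  obtain ⟨hWinj, hWsurj⟩ := bijective_of_coercive hc0 W hcoW hcoWa
  obtain ⟨hWainj, hWasurj⟩ := bijective_of_coercive hc0 (adjoint W) hcoWa
    (fun x => by rw [adjoint_adjoint]; exact hcoW x)
  -- continuous inverse of W
  obtain ⟨g, hgW, hWg⟩ : ∃ g : H →L[ℂ] H, g * W = 1 ∧ W * g = 1 := by
    obtain ⟨e, he⟩ : ∃ e : H ≃L[ℂ] H, ⇑e = ⇑W :=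
      ⟨ContinuousLinearEquiv.ofBijective W (LinearMap.ker_eq_bot.mpr hWinj)
        (LinearMap.range_eq_top.mpr hWsurj),
       ContinuousLinearEquiv.coeFn_ofBijective _ _ _⟩
    refine ⟨(e.symm : H →L[ℂ] H), ?_, ?_⟩
    · ext x
      rw [ContinuousLinearMap.mul_apply, ContinuousLinearMap.one_apply,
        ContinuousLinearEquiv.coe_coe, ← he]
      exact e.symm_apply_apply x
    · ext x
      rw [ContinuousLinearMap.mul_apply, ContinuousLinearMap.one_apply,
        ContinuousLinearEquiv.coe_coe, ← he]
      exact e.apply_symm_apply x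
  have f3 : adjoint W * adjoint g = 1 := by
    rw [← star_eq_adjoint, ← star_eq_adjoint, ← star_mul, hgW, star_one]
  have f4 : adjoint g * adjoint W = 1 := by
    rw [← star_eq_adjoint, ← star_eq_adjoint, ← star_mul, hWg, star_one]
  -- corner vanishing facts
  have hP1P : P * (1 - P) = 0 := by rw [mul_sub, mul_one, hP2, sub_self]
  have h1PP : (1 - P) * P = 0 := by rw [sub_mul, one_mul, hP2, sub_self]
  have z1 : α * (1 - P) = 0 := by
    rw [hαdef, mul_assoc (P * V) P (1 - P), hP1P, mul_zero]
  have z2 : (1 - P) * α = 0 := by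
    rw [hαdef, ← mul_assoc, ← mul_assoc, h1PP, zero_mul, zero_mul]
  have z1a : adjoint α * (1 - P) = 0 := by
    rw [hαa, mul_assoc, mul_assoc, hP1P, mul_zero, mul_zero]
  have z2a : (1 - P) * adjoint α = 0 := by
    rw [hαa, ← mul_assoc, h1PP, zero_mul]
  have f5 : W * (1 - P) = 1 - P := by rw [hWdef, sub_mul, one_mul, z1, sub_zero]
  have f6 : (1 - P) * W = 1 - P := by rw [hWdef, mul_sub, mul_one, z2, sub_zero]
  have f7 : adjoint W * (1 - P) = 1 - P := by rw [hWa, sub_mul, one_mul, z1a, sub_zero]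
  have f8 : (1 - P) * adjoint W = 1 - P := by rw [hWa, mul_sub, mul_one, z2a, sub_zero]
  obtain ⟨S, hSdef⟩ : ∃ S : H →L[ℂ] H, S = g + adjoint g + P - 2 := ⟨_, rfl⟩
  -- main identities
  have I1 : W * S * adjoint W = P - α * adjoint α := by
    have step : P * adjoint W = adjoint W - (1 - P) := by
      have h : P * adjoint W = adjoint W - (1 - P) * adjoint W := by noncomm_ring
      rw [h, f8]
    calc W * S * adjoint W
        = (W * g) * adjoint W + W * (adjoint g * adjoint W) + W * (P * adjoint W)
            - 2 * (W * adjoint W) := by rw [hSdef]; noncomm_ring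
      _ = (1 : H →L[ℂ] H) * adjoint W + W * 1 + W * (adjoint W - (1 - P))
            - 2 * (W * adjoint W) := by rw [hWg, f4, step]
      _ = adjoint W + W + (W * adjoint W - W * (1 - P)) - 2 * (W * adjoint W) := by
            rw [one_mul, mul_one, mul_sub]
      _ = adjoint W + W + (W * adjoint W - (1 - P)) - 2 * (W * adjoint W) := by rw [f5]
      _ = P - α * adjoint α := by rw [hWa, hWdef]; noncomm_ring
  have I2 : adjoint W * S * W = P - adjoint α * α := by
    have step : P * W = W - (1 - P) := by
      have h : P * W = W - (1 - P) * W := by noncomm_ring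
      rw [h, f6]
    calc adjoint W * S * W
        = adjoint W * (g * W) + (adjoint W * adjoint g) * W + adjoint W * (P * W)
            - 2 * (adjoint W * W) := by rw [hSdef]; noncomm_ring
      _ = adjoint W * 1 + (1 : H →L[ℂ] H) * W + adjoint W * (W - (1 - P))
            - 2 * (adjoint W * W) := by rw [hgW, f3, step]
      _ = adjoint W + W + (adjoint W * W - adjoint W * (1 - P)) - 2 * (adjoint W * W) := by
            rw [one_mul, mul_one, mul_sub]
      _ = adjoint W + W + (adjoint W * W - (1 - P)) - 2 * (adjoint W * W) := by rw [f7]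
      _ = P - adjoint α * α := by rw [hWa, hWdef]; noncomm_ring
  have hQ2 : (1 - P) * (1 - P) = 1 - P := by
    have h : (1 - P) * (1 - P) = 1 - P - P + P * P := by noncomm_ring
    rw [h, hP2]
    noncomm_ring
  obtain ⟨b, hbdef⟩ : ∃ b : H →L[ℂ] H, b = P * V * (1 - P) := ⟨_, rfl⟩
  obtain ⟨c', hcdef⟩ : ∃ c' : H →L[ℂ] H, c' = (1 - P) * V * P := ⟨_, rfl⟩
  rw [← hbdef, ← hcdef]
  have hba : adjoint b = (1 - P) * (adjoint V * P) := by
    rw [← star_eq_adjoint, hbdef, star_mul, star_mul, star_sub, star_one, hstarP,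
      star_eq_adjoint]
  have hca : adjoint c' = P * (adjoint V * (1 - P)) := by
    rw [← star_eq_adjoint, hcdef, star_mul, star_mul, star_sub, star_one, hstarP,
      star_eq_adjoint]
  have t2 : (P * V) * (adjoint V * P) = P := by
    have h : (P * V) * (adjoint V * P) = P * (V * adjoint V) * P := by noncomm_ring
    rw [h, hV2, mul_one, hP2]
  have t3 : α * adjoint α = (P * V) * (P * (adjoint V * P)) := by
    have h : α * adjoint α = (P * V) * ((P * P) * (adjoint V * P)) := by
      rw [hαa, hαdef]; noncomm_ring
    rw [h, hP2]
  have I3 : b * adjoint b = P - α * adjoint α := by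
    calc b * adjoint b
        = (P * V) * ((1 - P) * (1 - P)) * (adjoint V * P) := by
          rw [hba, hbdef]; noncomm_ring
      _ = (P * V) * (1 - P) * (adjoint V * P) := by rw [hQ2]
      _ = (P * V) * (adjoint V * P) - (P * V) * (P * (adjoint V * P)) := by noncomm_ring
      _ = P - α * adjoint α := by rw [t2, ← t3]
  have t2' : (P * adjoint V) * (V * P) = P := by
    have h : (P * adjoint V) * (V * P) = P * (adjoint V * V) * P := by noncomm_ring
    rw [h, hV1, mul_one, hP2]
  have t3' : adjoint α * α = (P * adjoint V) * (P * (V * P)) := by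
    have h : adjoint α * α = (P * adjoint V) * ((P * P) * (V * P)) := by
      rw [hαa, hαdef]; noncomm_ring
    rw [h, hP2]
  have I4 : adjoint c' * c' = P - adjoint α * α := by
    calc adjoint c' * c'
        = (P * adjoint V) * ((1 - P) * (1 - P)) * (V * P) := by
          rw [hca, hcdef]; noncomm_ring
      _ = (P * adjoint V) * (1 - P) * (V * P) := by rw [hQ2]
      _ = (P * adjoint V) * (V * P) - (P * adjoint V) * (P * (V * P)) := by noncomm_ring
      _ = P - adjoint α * α := by rw [t2', ← t3']
  -- rank chain
  have r1 : LinearMap.rank (b : H →ₗ[ℂ] H) =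
      LinearMap.rank ((adjoint b : H →L[ℂ] H) : H →ₗ[ℂ] H) := (rank_adjoint b).symm
  have r2 : LinearMap.rank ((adjoint b : H →L[ℂ] H) : H →ₗ[ℂ] H) =
      LinearMap.rank ((b * adjoint b : H →L[ℂ] H) : H →ₗ[ℂ] H) := by
    have h := rank_adjoint_mul_self (adjoint b)
    rw [adjoint_adjoint] at h
    exact h.symm
  have r4 : LinearMap.rank ((W * S * adjoint W : H →L[ℂ] H) : H →ₗ[ℂ] H) =
      LinearMap.rank (S : H →ₗ[ℂ] H) := by
    rw [mul_assoc, rank_mul_injective _ _ hWinj, rank_mul_surjective _ _ hWasurj]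
  have r5 : LinearMap.rank ((adjoint W * S * W : H →L[ℂ] H) : H →ₗ[ℂ] H) =
      LinearMap.rank (S : H →ₗ[ℂ] H) := by
    rw [mul_assoc, rank_mul_injective _ _ hWainj, rank_mul_surjective _ _ hWsurj]
  have r7 : LinearMap.rank ((adjoint c' * c' : H →L[ℂ] H) : H →ₗ[ℂ] H) =
      LinearMap.rank (c' : H →ₗ[ℂ] H) := rank_adjoint_mul_self c'
  calc LinearMap.rank (b : H →ₗ[ℂ] H)
      = LinearMap.rank ((b * adjoint b : H →L[ℂ] H) : H →ₗ[ℂ] H) := r1.trans r2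
    _ = LinearMap.rank ((W * S * adjoint W : H →L[ℂ] H) : H →ₗ[ℂ] H) := by rw [I3, I1]
    _ = LinearMap.rank (S : H →ₗ[ℂ] H) := r4
    _ = LinearMap.rank ((adjoint W * S * W : H →L[ℂ] H) : H →ₗ[ℂ] H) := r5.symm
    _ = LinearMap.rank ((adjoint c' * c' : H →L[ℂ] H) : H →ₗ[ℂ] H) := by rw [I2, I4]
    _ = LinearMap.rank (c' : H →ₗ[ℂ] H) := r7

end Aux

theorem stmt18 {H : Type*} [NormedAddCommGroup H] [InnerProductSpace ℂ H]
    [CompleteSpace H] [TopologicalSpace.SeparableSpace H]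
    (hinf : ¬ FiniteDimensional ℂ H) (U : H →L[ℂ] H)
    (hU : ContinuousLinearMap.adjoint U * U = 1 ∧ U * ContinuousLinearMap.adjoint U = 1)
    (hspec : spectrum ℂ U ≠ {z : ℂ | ‖z‖ = 1}) :
    HasCR U := by
  obtain ⟨hU1, hU2⟩ := hU
  intro P hP
  obtain ⟨hP2, hPa⟩ := hP
  -- H is nontrivial
  have hnt : Nontrivial H := by
    by_contra hn
    rw [not_nontrivial_iff_subsingleton] at hn
    exact hinf inferInstance
  -- find a point on the circle outside the spectrum
  have hUmem : U ∈ unitary (H →L[ℂ] H) := by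
    constructor
    · rw [star_eq_adjoint]; exact hU1
    · rw [star_eq_adjoint]; exact hU2
  have hsub := spectrum.subset_circle_of_unitary (𝕜 := ℂ) hUmem
  have hexists : ∃ lam : ℂ, ‖lam‖ = 1 ∧ lam ∉ spectrum ℂ U := by
    by_contra h
    push_neg at h
    apply hspec
    apply Set.Subset.antisymm
    · intro z hz
      have := hsub hz
      rw [Metric.mem_sphere, dist_zero_right] at this
      exact this
    · intro z hz
      exact h z hz
  obtain ⟨lam, hlam1, hlam2⟩ := hexists
  have hlamne : lam ≠ 0 := by
    intro h
    rw [h, norm_zero] at hlam1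
    norm_num at hlam1
  have hll : star lam * lam = 1 := by
    rw [Complex.star_def, mul_comm, Complex.mul_conj, Complex.normSq_eq_norm_sq,
      hlam1]
    norm_num
  have hll2 : lam * star lam = 1 := by rw [mul_comm]; exact hll
  set V : H →L[ℂ] H := star lam • U with hVdef
  have hVa : adjoint V = lam • adjoint U := by
    rw [← star_eq_adjoint, hVdef, star_smul, star_star, star_eq_adjoint]
  have hV1 : adjoint V * V = 1 := by
    rw [hVa, hVdef, smul_mul_assoc, mul_smul_comm, hU1, smul_smul, hll2, one_smul]
  have hV2 : V * adjoint V = 1 := by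
    rw [hVa, hVdef, smul_mul_assoc, mul_smul_comm, hU2, smul_smul, hll, one_smul]
  have hUV : U = lam • V := by
    rw [hVdef, smul_smul, hll2, one_smul]
  -- 1 - V is invertible
  have hunit : IsUnit (1 - V) := by
    have h1 : IsUnit (algebraMap ℂ (H →L[ℂ] H) lam - U) := spectrum.notMem_iff.mp hlam2
    have h2 : (1 - V : H →L[ℂ] H) =
        (star lam • (1 : H →L[ℂ] H)) * (algebraMap ℂ (H →L[ℂ] H) lam - U) := by
      rw [Algebra.algebraMap_eq_smul_one, smul_mul_assoc, one_mul, smul_sub, smul_smul,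
        hll, one_smul, hVdef]
    rw [h2]
    refine IsUnit.mul ?_ h1
    refine ⟨⟨star lam • (1 : H →L[ℂ] H), lam • (1 : H →L[ℂ] H), ?_, ?_⟩, rfl⟩
    · rw [smul_mul_assoc, one_mul, smul_smul, hll, one_smul]
    · rw [smul_mul_assoc, one_mul, smul_smul, hll2, one_smul]
  obtain ⟨u, hu⟩ := hunit
  obtain ⟨g₀, hg₀1⟩ : ∃ g₀ : H →L[ℂ] H, g₀ * (1 - V) = 1 := by
    refine ⟨↑u⁻¹, ?_⟩
    rw [← hu]
    exact u.inv_mul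
  have hgpos : 0 < ‖g₀‖ := by
    rcases (norm_nonneg g₀).eq_or_lt with h0 | h0
    · exfalso
      have hg0 : g₀ = 0 := norm_eq_zero.mp h0.symm
      rw [hg0, zero_mul] at hg₀1
      obtain ⟨x, hx⟩ := exists_ne (0 : H)
      have := congrArg (fun f : H →L[ℂ] H => f x) hg₀1
      simp at this
      exact hx this.symm
    · exact h0
  set δ : ℝ := ‖g₀‖⁻¹ with hδdef
  have hδpos : 0 < δ := inv_pos.mpr hgpos
  have hlow : ∀ x : H, δ * ‖x‖ ≤ ‖(1 - V) x‖ := by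
    intro x
    have hx : x = g₀ ((1 - V) x) := by
      rw [← ContinuousLinearMap.mul_apply, hg₀1, ContinuousLinearMap.one_apply]
    have h1 : ‖x‖ ≤ ‖g₀‖ * ‖(1 - V) x‖ := by
      conv_lhs => rw [hx]
      exact g₀.le_opNorm _
    calc δ * ‖x‖ ≤ δ * (‖g₀‖ * ‖(1 - V) x‖) := mul_le_mul_of_nonneg_left h1 hδpos.le
      _ = ‖(1 - V) x‖ := by
          rw [← mul_assoc, hδdef, inv_mul_cancel₀ hgpos.ne', one_mul]
  -- V is an isometry
  have hVnorm : ∀ x : H, ‖V x‖ = ‖x‖ := by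
    intro x
    have h1 : (inner ℂ (V x) (V x) : ℂ) = inner ℂ x x := by
      rw [← adjoint_inner_left, ← ContinuousLinearMap.mul_apply, hV1,
        ContinuousLinearMap.one_apply]
    have h2 : ‖V x‖ ^ 2 = ‖x‖ ^ 2 := by
      rw [← inner_self_eq_norm_sq (𝕜 := ℂ), ← inner_self_eq_norm_sq (𝕜 := ℂ), h1]
    exact (pow_left_inj₀ (norm_nonneg _) (norm_nonneg _) two_ne_zero).mp h2
  -- numerical range bound for V
  set c : ℝ := min (δ ^ 2 / 2) 1 with hcdef
  have hc0 : 0 < c := lt_min (by positivity) one_pos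
  have hc1 : c ≤ 1 := min_le_right _ _
  have hVc : ∀ x : H, RCLike.re (inner ℂ (V x) x : ℂ) ≤ (1 - c) * ‖x‖ ^ 2 := by
    intro x
    have hns : ‖x - V x‖ ^ 2 = ‖x‖ ^ 2 - 2 * RCLike.re (inner ℂ x (V x) : ℂ) + ‖V x‖ ^ 2 :=
      norm_sub_sq (𝕜 := ℂ) x (V x)
    have hsub' : (1 - V) x = x - V x := by
      rw [ContinuousLinearMap.sub_apply, ContinuousLinearMap.one_apply]
    have h1 : δ ^ 2 * ‖x‖ ^ 2 ≤ ‖x - V x‖ ^ 2 := by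
      have := hlow x
      rw [hsub'] at this
      have hsq : (δ * ‖x‖) * (δ * ‖x‖) ≤ ‖x - V x‖ * ‖x - V x‖ :=
        mul_le_mul this this (by positivity) (norm_nonneg _)
      nlinarith [hsq]
    rw [hVnorm] at hns
    have hc2 : c ≤ δ ^ 2 / 2 := min_le_left _ _
    have hre : RCLike.re (inner ℂ (V x) x : ℂ) = RCLike.re (inner ℂ x (V x) : ℂ) :=
      inner_re_symm _ _
    rw [hre]
    have hh : 2 * RCLike.re (inner ℂ x (V x) : ℂ) = 2 * ‖x‖ ^ 2 - ‖x - V x‖ ^ 2 := by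
      linarith [hns]
    have h6 : c * ‖x‖ ^ 2 ≤ δ ^ 2 / 2 * ‖x‖ ^ 2 :=
      mul_le_mul_of_nonneg_right hc2 (sq_nonneg _)
    linarith [h1, h6, hh]
  have hkey := key_corner_rank V hV1 hV2 hc0 hc1 hVc P hP2 hPa
  have hb : P * U * (1 - P) = lam • (P * V * (1 - P)) := by
    rw [hUV, mul_smul_comm, smul_mul_assoc]
  have hc' : (1 - P) * U * P = lam • ((1 - P) * V * P) := by
    rw [hUV, mul_smul_comm, smul_mul_assoc]
  have hr : ∀ T : H →L[ℂ] H,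
      LinearMap.rank ((lam • T : H →L[ℂ] H) : H →ₗ[ℂ] H) =
        LinearMap.rank (T : H →ₗ[ℂ] H) := by
    intro T
    have hcoe : ((lam • T : H →L[ℂ] H) : H →ₗ[ℂ] H) = lam • (T : H →ₗ[ℂ] H) := rfl
    rw [hcoe, LinearMap.rank, LinearMap.range_smul _ _ hlamne]
  rw [hb, hc', hr, hr]
  exact hkey
end
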